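/- Let (X_ℓ)_{ℓ=1,…,L} be i.i.d. Gaussian random variables with mean 0 and variance ε² > 0, and let δ > 1. If L = 1 + ⌊log(ε^{-2})⌋, then P( Σ_{ℓ=1}^{L} X_ℓ² ≥ δ²ε²L ) ≤ ε^{(δ-1)²}. -/

import Mathlib

open MeasureTheory ProbabilityTheory Real

lemma aux_pi_int {E : Type*} [MeasurableSpace E] (μ : Measure E) [SigmaFinite μ]
    {ι : Type*} [Fintype ι] (f : E → ℝ) (hf : Integrable f μ) :
    Integrable (fun x : ι → E => ∏ i, f (x i)) (Measure.pi fun _ => μ) ∧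
      ∫ x : ι → E, ∏ i, f (x i) ∂(Measure.pi fun _ => μ)
        = (∫ x, f x ∂μ) ^ Fintype.card ι := by
  letI : MeasureSpace E := ⟨μ⟩
  have hvol : (volume : Measure (ι → E)) = Measure.pi fun _ => μ := rfl
  refine ⟨?_, ?_⟩
  · rw [← hvol]; exact MeasureTheory.Integrable.fintype_prod (f := fun _ : ι => f) (fun _ => hf)
  · rw [← hvol]; exact MeasureTheory.integral_fintype_prod_eq_pow (ι := ι) f

lemma gauss_sq_exp (ε δ : ℝ) (hε : 0 < ε) (hδ : 1 < δ) :
    (Integrable (fun x => Real.exp ((1 - δ⁻¹ ^ 2) / (2 * ε ^ 2) * x ^ 2))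
        (gaussianReal 0 ⟨ε ^ 2, sq_nonneg ε⟩)) ∧
      ∫ x, Real.exp ((1 - δ⁻¹ ^ 2) / (2 * ε ^ 2) * x ^ 2)
          ∂(gaussianReal 0 ⟨ε ^ 2, sq_nonneg ε⟩) = δ := by
  set v : NNReal := ⟨ε ^ 2, sq_nonneg ε⟩ with hv_def
  have hδ0 : 0 < δ := lt_trans one_pos hδ
  have hε2 : (0:ℝ) < ε ^ 2 := by positivity
  have hv : v ≠ 0 := by
    intro h
    have : (v : ℝ) = 0 := by rw [h]; simp
    rw [hv_def] at this
    change ε ^ 2 = 0 at this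
    linarith
  set l : ℝ := (1 - δ⁻¹ ^ 2) / (2 * ε ^ 2) with hl_def
  set b : ℝ := 1 / (2 * ε ^ 2 * δ ^ 2) with hb_def
  have hb : 0 < b := by positivity
  have hpdf : ∀ x : ℝ, gaussianPDFReal 0 v x * Real.exp (l * x ^ 2)
      = (Real.sqrt (2 * π * ε ^ 2))⁻¹ * Real.exp (-b * x ^ 2) := by
    intro x
    rw [gaussianPDFReal]
    have hcoe : (v : ℝ) = ε ^ 2 := rfl
    rw [hcoe, mul_assoc, ← Real.exp_add]
    congr 1
    have hδne : δ ≠ 0 := ne_of_gt hδ0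
    have hεne : ε ≠ 0 := ne_of_gt hε
    rw [hb_def, hl_def]
    field_simp
    ring
  have hrw : (gaussianReal 0 v)
      = volume.withDensity fun x => ((gaussianPDFReal 0 v x).toNNReal : ENNReal) :=
    gaussianReal_of_var_ne_zero 0 hv
  have hmeas : Measurable fun x => (gaussianPDFReal 0 v x).toNNReal :=
    (measurable_gaussianPDFReal 0 v).real_toNNReal
  have hsmul : ∀ x : ℝ, (gaussianPDFReal 0 v x).toNNReal • Real.exp (l * x ^ 2)
      = (Real.sqrt (2 * π * ε ^ 2))⁻¹ * Real.exp (-b * x ^ 2) := by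
    intro x
    rw [NNReal.smul_def, smul_eq_mul, Real.coe_toNNReal _ (gaussianPDFReal_nonneg 0 v x)]
    exact hpdf x
  have hint_vol : Integrable (fun x =>
      (Real.sqrt (2 * π * ε ^ 2))⁻¹ * Real.exp (-b * x ^ 2)) volume :=
    (integrable_exp_neg_mul_sq hb).const_mul _
  constructor
  · rw [hrw, integrable_withDensity_iff_integrable_smul hmeas]
    exact hint_vol.congr (Filter.Eventually.of_forall fun x => (hsmul x).symm)
  · rw [hrw, integral_withDensity_eq_integral_smul hmeas]
    simp_rw [hsmul]
    rw [integral_const_mul, integral_gaussian]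
    have h2pi : (0:ℝ) < 2 * π * ε ^ 2 := by positivity
    have : π / b = 2 * π * ε ^ 2 * δ ^ 2 := by
      rw [hb_def]; field_simp
    rw [this, Real.sqrt_mul h2pi.le, Real.sqrt_sq hδ0.le]
    rw [inv_mul_eq_div, mul_comm, mul_div_assoc, div_self (by positivity : Real.sqrt (2 * π * ε ^ 2) ≠ 0), mul_one]

/-- Large deviation inequality (Lemma 2). If `X_1,…,X_L` are i.i.d.
`N(0,ε²)` with `L = 1 + ⌊log(ε^{-2})⌋` and `δ > 1`, then
`P(Σ X_ℓ² ≥ δ²ε²L) ≤ ε^{(δ-1)²}`. -/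
theorem stmt2 (ε δ : ℝ) (hε : 0 < ε) (hε1 : ε < 1) (hδ : 1 < δ)
    (L : ℕ) (hL : L = 1 + ⌊Real.log (ε ^ (-2 : ℝ))⌋₊) :
    (Measure.pi (fun _ : Fin L => gaussianReal 0 ⟨ε ^ 2, sq_nonneg ε⟩))
        {x | δ ^ 2 * ε ^ 2 * L ≤ ∑ ℓ : Fin L, (x ℓ) ^ 2}
      ≤ ENNReal.ofReal (ε ^ ((δ - 1) ^ 2)) := by
  have hδ0 : (0:ℝ) < δ := lt_trans one_pos hδ
  have hε2 : (0:ℝ) < ε ^ 2 := by positivity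
  set μ : Measure (Fin L → ℝ) :=
    Measure.pi (fun _ : Fin L => gaussianReal 0 ⟨ε ^ 2, sq_nonneg ε⟩) with hμ
  haveI : IsProbabilityMeasure (gaussianReal 0 ⟨ε ^ 2, sq_nonneg ε⟩) :=
    instIsProbabilityMeasureGaussianReal _ _
  haveI : IsProbabilityMeasure μ := by rw [hμ]; infer_instance
  set l : ℝ := (1 - δ⁻¹ ^ 2) / (2 * ε ^ 2) with hl_def
  have hl_nonneg : 0 ≤ l := by
    apply div_nonneg _ (by positivity)
    have : δ⁻¹ ^ 2 < 1 := by
      have h1 : δ⁻¹ < 1 := inv_lt_one_of_one_lt₀ hδ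
      have h2 : 0 < δ⁻¹ := by positivity
      nlinarith
    linarith
  obtain ⟨hint1, hJ⟩ := gauss_sq_exp ε δ hε hδ
  set X : (Fin L → ℝ) → ℝ := fun x => ∑ ℓ : Fin L, (x ℓ) ^ 2 with hX
  have hprod : ∀ x : Fin L → ℝ,
      Real.exp (l * X x) = ∏ ℓ : Fin L, Real.exp (l * (x ℓ) ^ 2) := by
    intro x
    rw [hX, Finset.mul_sum, Real.exp_sum]
  obtain ⟨hint_pi, hint_eq⟩ := aux_pi_int (ι := Fin L)
    (gaussianReal 0 ⟨ε ^ 2, sq_nonneg ε⟩) (fun y => Real.exp (l * y ^ 2)) hint1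
  have h_int : Integrable (fun ω => Real.exp (l * X ω)) μ := by
    rw [hμ]
    exact hint_pi.congr (Filter.Eventually.of_forall fun x => (hprod x).symm)
  have hmgf : mgf X μ l = δ ^ L := by
    rw [mgf]
    calc ∫ ω, Real.exp (l * X ω) ∂μ
        = ∫ x : Fin L → ℝ, ∏ ℓ : Fin L, Real.exp (l * (x ℓ) ^ 2) ∂μ := by
          exact integral_congr_ae (Filter.Eventually.of_forall hprod)
      _ = (∫ y, Real.exp (l * y ^ 2) ∂(gaussianReal 0 ⟨ε ^ 2, sq_nonneg ε⟩)) ^ Fintype.card (Fin L) := by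
          rw [hμ]; exact hint_eq
      _ = δ ^ L := by rw [hJ, Fintype.card_fin]
  have hcher := measure_ge_le_exp_mul_mgf (X := X) (μ := μ) (t := l)
    (δ ^ 2 * ε ^ 2 * L) hl_nonneg h_int
  rw [hmgf] at hcher
  -- arithmetic bound on the RHS
  have hεlog : Real.log ε < 0 := Real.log_neg hε hε1
  have hLge : -2 * Real.log ε < (L : ℝ) := by
    have h1 : Real.log (ε ^ (-2:ℝ)) < (⌊Real.log (ε ^ (-2:ℝ))⌋₊ : ℝ) + 1 :=
      Nat.lt_floor_add_one _
    have h2 : Real.log (ε ^ (-2:ℝ)) = -2 * Real.log ε := Real.log_rpow hε _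
    have h3 : (L : ℝ) = (⌊Real.log (ε ^ (-2:ℝ))⌋₊ : ℝ) + 1 := by
      rw [hL]; push_cast; ring
    rw [h3, ← h2]; exact h1
  have hlogδ : Real.log δ ≤ δ - 1 := by
    have := Real.log_le_sub_one_of_pos hδ0
    linarith
  have hla : l * (δ ^ 2 * ε ^ 2 * L) = (δ ^ 2 - 1) * L / 2 := by
    rw [hl_def]
    field_simp
  have hbound : Real.exp (-l * (δ ^ 2 * ε ^ 2 * L)) * δ ^ L ≤ ε ^ ((δ - 1) ^ 2) := by
    have hδpow : (δ : ℝ) ^ L = Real.exp ((L : ℝ) * Real.log δ) := by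
      rw [← Real.exp_log hδ0, ← Real.exp_nat_mul, Real.exp_log hδ0]
    have hεpow : ε ^ ((δ - 1) ^ 2) = Real.exp ((δ - 1) ^ 2 * Real.log ε) := by
      rw [Real.rpow_def_of_pos hε]; ring_nf
    rw [hδpow, hεpow, ← Real.exp_add, Real.exp_le_exp, neg_mul, hla]
    have hLnn : (0:ℝ) ≤ (L : ℝ) := Nat.cast_nonneg L
    nlinarith [sq_nonneg (δ - 1), mul_le_mul_of_nonneg_left hlogδ hLnn,
      mul_lt_mul_of_pos_left hLge (by nlinarith : (0:ℝ) < (δ-1)^2 / 2)]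
  calc μ {x | δ ^ 2 * ε ^ 2 * (L:ℝ) ≤ ∑ ℓ : Fin L, (x ℓ) ^ 2}
      = ENNReal.ofReal (μ {ω | δ ^ 2 * ε ^ 2 * (L:ℝ) ≤ X ω}).toReal := by
        rw [ENNReal.ofReal_toReal (measure_ne_top _ _)]
    _ ≤ ENNReal.ofReal (ε ^ ((δ - 1) ^ 2)) := by
        apply ENNReal.ofReal_le_ofReal
        exact le_trans hcher hbound
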